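/- Let M be a matroid on finite ground set X and let A = {a_1,…,a_r} and B = {b_1,…,b_r} be two bases of M (a_1,…,a_r distinct and b_1,…,b_r distinct), indexed so that (A∖{a_i})∪{b_i} is a base of M for each 1 ≤ i ≤ r. Let g : 2^X → ℝ be a set function, let ℓ(C) = ∑_{j∈C} w_j be a linear set function given by weights w : X → ℝ, and suppose h : 2^X → ℝ satisfies (e/(e−1))·g(A) ≥ g(B) + ∑_{i=1}^r [h(A) − h((A∖{a_i})∪{b_i})]. Define ψ(C) = (1−1/e)·h(C) + ℓ(C). Then g(A) + ℓ(A) ≥ (1−1/e)·g(B) + ℓ(B) + ∑_{i=1}^r [ψ(A) − ψ((A∖{a_i})∪{b_i})]. -/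

import Mathlib

/-- Lemma 5.2 (non-oblivious local search locality gap): given bases `A = {a_1,…,a_r}` and
`B = {b_1,…,b_r}` of a matroid indexed so that every swap `(A∖{a_i})∪{b_i}` is a base, a set
function `g`, a linear function `ℓ` given by weights `w`, and an auxiliary potential `h`
satisfying the Filmus–Ward inequality, the potential `ψ(C) = (1-1/e)·h(C) + ℓ(C)` satisfies
`g(A) + ℓ(A) ≥ (1-1/e)·g(B) + ℓ(B) + ∑_i [ψ(A) - ψ((A∖{a_i})∪{b_i})]`. -/
theorem stmt_3 {α : Type*} [Fintype α] [DecidableEq α] (M : Matroid α) (r : ℕ)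
    (a b : Fin r → α) (ha : Function.Injective a) (hb : Function.Injective b)
    (A B : Finset α)
    (hAdef : A = Finset.image a Finset.univ) (hBdef : B = Finset.image b Finset.univ)
    (hAbase : M.IsBase (A : Set α)) (hBbase : M.IsBase (B : Set α))
    (hswap : ∀ i : Fin r, M.IsBase ((insert (b i) (A.erase (a i)) : Finset α) : Set α))
    (g h : Finset α → ℝ) (w : α → ℝ) (ℓ : Finset α → ℝ)
    (hlin : ∀ C : Finset α, ℓ C = ∑ j ∈ C, w j)
    (hFW : Real.exp 1 / (Real.exp 1 - 1) * g A ≥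
      g B + ∑ i : Fin r, (h A - h (insert (b i) (A.erase (a i)))))
    (ψ : Finset α → ℝ)
    (hψ : ∀ C : Finset α, ψ C = (1 - 1 / Real.exp 1) * h C + ℓ C) :
    g A + ℓ A ≥ (1 - 1 / Real.exp 1) * g B + ℓ B +
      ∑ i : Fin r, (ψ A - ψ (insert (b i) (A.erase (a i)))) := by
  set e := Real.exp 1 with he
  have he1 : 1 < e := by
    rw [he]; have := Real.add_one_le_exp (1 : ℝ); linarith
  -- b i is not in A.erase (a i)
  have hnot : ∀ i : Fin r, b i ∉ A.erase (a i) := by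
    intro i hbi
    have hins : (insert (b i) (A.erase (a i)) : Finset α) = A.erase (a i) :=
      Finset.insert_eq_self.2 hbi
    have hsub : ((A.erase (a i) : Finset α) : Set α) ⊆ (A : Set α) := by
      intro x hx
      simp only [Finset.coe_erase, Set.mem_diff] at hx
      exact hx.1
    have hbase' : M.IsBase ((A.erase (a i) : Finset α) : Set α) := by
      have := hswap i; rwa [hins] at this
    have heq : ((A.erase (a i) : Finset α) : Set α) = (A : Set α) :=
      hbase'.eq_of_subset_isBase hAbase hsub
    have haA : a i ∈ A := by
      rw [hAdef]; exact Finset.mem_image_of_mem a (Finset.mem_univ i)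
    have : (a i : α) ∈ ((A.erase (a i) : Finset α) : Set α) := by
      rw [heq]; exact_mod_cast haA
    simp at this
  have haA : ∀ i : Fin r, a i ∈ A := by
    intro i; rw [hAdef]; exact Finset.mem_image_of_mem a (Finset.mem_univ i)
  -- ℓ of swaps
  have hℓswap : ∀ i : Fin r, ℓ (insert (b i) (A.erase (a i))) = ℓ A - w (a i) + w (b i) := by
    intro i
    rw [hlin, Finset.sum_insert (hnot i), Finset.sum_erase_eq_sub (haA i), hlin]
    ring
  have hℓA : ℓ A = ∑ i : Fin r, w (a i) := by
    rw [hlin, hAdef, Finset.sum_image (fun x _ y _ hxy => ha hxy)]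
  have hℓB : ℓ B = ∑ i : Fin r, w (b i) := by
    rw [hlin, hBdef, Finset.sum_image (fun x _ y _ hxy => hb hxy)]
  set S := ∑ i : Fin r, (h A - h (insert (b i) (A.erase (a i)))) with hS
  -- sum of ψ differences
  have hsum : ∑ i : Fin r, (ψ A - ψ (insert (b i) (A.erase (a i))))
      = (1 - 1/e) * S + (ℓ A - ℓ B) := by
    rw [hS, Finset.mul_sum, hℓA, hℓB, ← Finset.sum_sub_distrib, ← Finset.sum_add_distrib]
    apply Finset.sum_congr rfl
    intro i _
    rw [hψ, hψ, hℓswap i]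
    ring
  -- key inequality from FW
  have hepos : (0:ℝ) < e := by linarith
  have hkey : g A ≥ (1 - 1/e) * (g B + S) := by
    have h1 : (1 - 1/e) = (e - 1)/e := by field_simp
    have h2 : (0:ℝ) < (e-1)/e := div_pos (by linarith) hepos
    have := mul_le_mul_of_nonneg_left hFW (le_of_lt h2)
    calc (1 - 1/e) * (g B + S) = (e-1)/e * (g B + S) := by rw [h1]
      _ ≤ (e-1)/e * (e / (e - 1) * g A) := this
      _ = g A := by
          have hne : e ≠ 0 := ne_of_gt hepos
          have hne1 : e - 1 ≠ 0 := by linarith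
          field_simp
  rw [hsum]
  nlinarith [hkey]
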